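/- arXiv:2312.16824 — 2 statements merged into one kernel-verified Lean document; each statement's English description precedes it below -/
import Mathlib

section
/- Let k ≥ 1 be an integer and let N ≥ 0 be any number of variables. In the polynomial ring ℤ[x_1,…,x_N], the elementary symmetric polynomial of degree 2k satisfies e_{2k} = Σ_{i=0}^{k} (−1)^i · m_{(2^i)} · h_{2k−2i}, where (2^i) denotes the partition with i parts all equal to 2. -/
open MvPolynomial Finset
open scoped symmDiff

/-- The rectangular partition `(a^i)` with `i` parts all equal to `a` (for `a ≥ 1`). -/
def rectPartition (a i : ℕ) : Nat.Partition (a * i) :=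
  Nat.Partition.ofSums (a * i) (Multiset.replicate i a)
    (by rw [Multiset.sum_replicate, smul_eq_mul, mul_comm])

namespace EsymmHsymmAux

variable {N : ℕ}

/-- weight of a pair (set, multiset) -/
noncomputable def wgt (p : Finset (Fin N) × Multiset (Fin N)) : MvPolynomial (Fin N) ℤ :=
  (-1) ^ p.1.card * (∏ i ∈ p.1, X i) * (p.2.map X).prod

/-- multisets of fixed cardinality as a Finset -/
def msets (N b : ℕ) : Finset (Multiset (Fin N)) :=
  Finset.univ.image (fun s : Sym (Fin N) b => (s : Multiset (Fin N)))

lemma mem_msets {b : ℕ} {μ : Multiset (Fin N)} :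
    μ ∈ msets N b ↔ Multiset.card μ = b := by
  constructor
  · rintro h
    rw [msets, Finset.mem_image] at h
    obtain ⟨s, -, rfl⟩ := h
    exact s.2
  · intro h
    rw [msets, Finset.mem_image]
    exact ⟨⟨μ, h⟩, Finset.mem_univ _, rfl⟩

lemma hsymm_eq (b : ℕ) :
    hsymm (Fin N) ℤ b = ∑ μ ∈ msets N b, (μ.map X).prod := by
  rw [msets, Finset.sum_image (fun s _ t _ h => Sym.coe_injective h)]
  rfl

/-- the index finset for the e-h convolution -/
def idx (N n : ℕ) : Finset (Finset (Fin N) × Multiset (Fin N)) :=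
  (Finset.HasAntidiagonal.antidiagonal n).biUnion fun ab => (powersetCard ab.1 univ) ×ˢ msets N ab.2

lemma mem_idx {n : ℕ} {p : Finset (Fin N) × Multiset (Fin N)} :
    p ∈ idx N n ↔ p.1.card + Multiset.card p.2 = n := by
  simp only [idx, Finset.mem_biUnion, Finset.HasAntidiagonal.mem_antidiagonal, Finset.mem_product,
    mem_powersetCard_univ, mem_msets, Prod.exists]
  constructor
  · rintro ⟨a, b, rfl, rfl, rfl⟩; rfl
  · rintro rfl
    exact ⟨p.1.card, Multiset.card p.2, rfl, rfl, rfl⟩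

lemma expansion (n : ℕ) :
    ∑ ab ∈ Finset.HasAntidiagonal.antidiagonal n,
      (-1 : MvPolynomial (Fin N) ℤ) ^ ab.1 * esymm (Fin N) ℤ ab.1 * hsymm (Fin N) ℤ ab.2 =
    ∑ p ∈ idx N n, wgt p := by
  rw [idx, Finset.sum_biUnion]
  · refine Finset.sum_congr rfl fun ab hab => ?_
    rw [Finset.HasAntidiagonal.mem_antidiagonal] at hab
    rw [esymm, hsymm_eq,
      show ((-1 : MvPolynomial (Fin N) ℤ) ^ ab.1 * ∑ t ∈ powersetCard ab.1 univ, ∏ i ∈ t, X i)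
        = ∑ t ∈ powersetCard ab.1 univ, (-1 : MvPolynomial (Fin N) ℤ) ^ ab.1 * ∏ i ∈ t, X i
        from Finset.mul_sum _ _ _,
      Finset.sum_mul_sum, Finset.sum_product]
    refine Finset.sum_congr rfl fun A hA => Finset.sum_congr rfl fun μ hμ => ?_
    rw [mem_powersetCard_univ] at hA
    simp only [wgt, hA]
  · intro ab hab cd hcd hne
    simp only [Finset.disjoint_left, Finset.mem_product, mem_powersetCard_univ, mem_msets]
    rintro p ⟨h1, h2⟩ ⟨h3, h4⟩
    have e1 : ab.1 = cd.1 := by rw [← h1, ← h3]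
    have e2 : ab.2 = cd.2 := by rw [← h2, ← h4]
    exact hne (Prod.ext e1 e2)


/-- the sign-reversing involution: move the largest variable between the set and the multiset -/
def flip (p : Finset (Fin N) × Multiset (Fin N)) : Finset (Fin N) × Multiset (Fin N) :=
  if h : (p.1 ∪ p.2.toFinset).Nonempty then
    if (p.1 ∪ p.2.toFinset).max' h ∈ p.1 then
      (p.1.erase ((p.1 ∪ p.2.toFinset).max' h), ((p.1 ∪ p.2.toFinset).max' h) ::ₘ p.2)
    else (insert ((p.1 ∪ p.2.toFinset).max' h) p.1, p.2.erase ((p.1 ∪ p.2.toFinset).max' h))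
  else p

lemma flip_union {p : Finset (Fin N) × Multiset (Fin N)} (h : (p.1 ∪ p.2.toFinset).Nonempty) :
    (flip p).1 ∪ (flip p).2.toFinset = p.1 ∪ p.2.toFinset := by
  set v := (p.1 ∪ p.2.toFinset).max' h with hv
  have hvmem : v ∈ p.1 ∪ p.2.toFinset := Finset.max'_mem _ h
  rw [flip, dif_pos h, ← hv]
  by_cases hc : v ∈ p.1
  · rw [if_pos hc]
    ext a
    simp only [Finset.mem_union, Finset.mem_erase, Multiset.toFinset_cons, Finset.mem_insert,
      Multiset.mem_toFinset]
    by_cases hav : a = v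
    · subst hav; tauto
    · tauto
  · rw [if_neg hc]
    have hvmem2 : v ∈ p.2 := by
      rw [Finset.mem_union, Multiset.mem_toFinset] at hvmem; tauto
    ext a
    simp only [Finset.mem_union, Finset.mem_insert, Multiset.mem_toFinset]
    by_cases hav : a = v
    · subst hav; simp [hvmem2]
    · constructor
      · rintro ((ha | ha) | ha)
        · exact absurd ha hav
        · tauto
        · exact Or.inr (Multiset.mem_of_mem_erase ha)
      · rintro (ha | ha)
        · tauto
        · exact Or.inr ((Multiset.mem_erase_of_ne hav).2 ha)

lemma flip_flip {p : Finset (Fin N) × Multiset (Fin N)} (h : (p.1 ∪ p.2.toFinset).Nonempty) :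
    flip (flip p) = p := by
  set v := (p.1 ∪ p.2.toFinset).max' h with hv
  have hvmem : v ∈ p.1 ∪ p.2.toFinset := Finset.max'_mem _ h
  have hu := flip_union h
  have h2 : ((flip p).1 ∪ (flip p).2.toFinset).Nonempty := by rw [hu]; exact h
  have hv2 : ((flip p).1 ∪ (flip p).2.toFinset).max' h2 = v := by
    congr 1 <;> rw [hu]
  rw [flip, dif_pos h2, hv2]
  by_cases hc : v ∈ p.1
  · have hfp : flip p = (p.1.erase v, v ::ₘ p.2) := by rw [flip, dif_pos h, ← hv, if_pos hc]
    simp only [hfp]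
    rw [if_neg (Finset.notMem_erase v p.1)]
    show (insert v (p.1.erase v), (v ::ₘ p.2).erase v) = p
    rw [Finset.insert_erase hc, Multiset.erase_cons_head]
  · have hvmem2 : v ∈ p.2 := by
      rw [Finset.mem_union, Multiset.mem_toFinset] at hvmem; tauto
    have hfp : flip p = (insert v p.1, p.2.erase v) := by rw [flip, dif_pos h, ← hv, if_neg hc]
    simp only [hfp]
    rw [if_pos (Finset.mem_insert_self v p.1)]
    show ((insert v p.1).erase v, v ::ₘ p.2.erase v) = p
    rw [Finset.erase_insert hc, Multiset.cons_erase hvmem2]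

lemma wgt_flip {p : Finset (Fin N) × Multiset (Fin N)} (h : (p.1 ∪ p.2.toFinset).Nonempty) :
    wgt (flip p) = - wgt p := by
  set v := (p.1 ∪ p.2.toFinset).max' h with hv
  have hvmem : v ∈ p.1 ∪ p.2.toFinset := Finset.max'_mem _ h
  rw [flip, dif_pos h, ← hv]
  by_cases hc : v ∈ p.1
  · rw [if_pos hc]
    have hcard : p.1.card = (p.1.erase v).card + 1 := by
      rw [Finset.card_erase_of_mem hc]
      exact (Nat.succ_pred_eq_of_pos (Finset.card_pos.2 ⟨v, hc⟩)).symm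
    simp only [wgt, Multiset.map_cons, Multiset.prod_cons]
    rw [hcard, ← Finset.mul_prod_erase p.1 X hc]
    ring
  · rw [if_neg hc]
    have hvmem2 : v ∈ p.2 := by
      rw [Finset.mem_union, Multiset.mem_toFinset] at hvmem; tauto
    simp only [wgt]
    rw [Finset.card_insert_of_notMem hc, Finset.prod_insert hc,
      ← Multiset.prod_map_erase (f := X) hvmem2]
    ring

lemma flip_ne {p : Finset (Fin N) × Multiset (Fin N)} (h : (p.1 ∪ p.2.toFinset).Nonempty) :
    flip p ≠ p := by
  set v := (p.1 ∪ p.2.toFinset).max' h with hv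
  have hvmem : v ∈ p.1 ∪ p.2.toFinset := Finset.max'_mem _ h
  rw [flip, dif_pos h, ← hv]
  by_cases hc : v ∈ p.1
  · rw [if_pos hc]
    intro heq
    have := congrArg Prod.fst heq
    simp only at this
    rw [← this] at hc
    exact Finset.notMem_erase v p.1 hc
  · rw [if_neg hc]
    intro heq
    have := congrArg Prod.fst heq
    simp only at this
    exact hc (this ▸ Finset.mem_insert_self v p.1)

lemma flip_card {p : Finset (Fin N) × Multiset (Fin N)} (h : (p.1 ∪ p.2.toFinset).Nonempty) :
    (flip p).1.card + Multiset.card (flip p).2 = p.1.card + Multiset.card p.2 := by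
  rw [flip, dif_pos h]
  by_cases hc : (p.1 ∪ p.2.toFinset).max' h ∈ p.1
  · rw [if_pos hc]
    simp only [Finset.card_erase_of_mem hc, Multiset.card_cons]
    have := Finset.card_pos.2 (⟨_, hc⟩ : p.1.Nonempty)
    omega
  · rw [if_neg hc]
    have hvmem2 : (p.1 ∪ p.2.toFinset).max' h ∈ p.2 := by
      have := Finset.max'_mem _ h
      rw [Finset.mem_union, Multiset.mem_toFinset] at this; tauto
    simp only [Finset.card_insert_of_notMem hc,
      Multiset.card_erase_of_mem hvmem2, Nat.pred_eq_sub_one]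
    have : 0 < Multiset.card p.2 := Multiset.card_pos_iff_exists_mem.2 ⟨_, hvmem2⟩
    omega

lemma nonempty_of_mem_idx {n : ℕ} (hn : 1 ≤ n) {p : Finset (Fin N) × Multiset (Fin N)}
    (hp : p ∈ idx N n) : (p.1 ∪ p.2.toFinset).Nonempty := by
  rw [mem_idx] at hp
  rcases Finset.eq_empty_or_nonempty (p.1 ∪ p.2.toFinset) with he | hne
  · rw [Finset.union_eq_empty] at he
    have h1 : p.1.card = 0 := by rw [he.1]; rfl
    have h2 : Multiset.card p.2 = 0 := by
      rw [Multiset.card_eq_zero]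
      by_contra h
      obtain ⟨a, ha⟩ := Multiset.exists_mem_of_ne_zero h
      have : a ∈ p.2.toFinset := Multiset.mem_toFinset.2 ha
      rw [he.2] at this
      exact absurd this (Finset.notMem_empty a)
    omega
  · exact hne

lemma sum_idx_eq_zero {n : ℕ} (hn : 1 ≤ n) :
    ∑ p ∈ idx N n, wgt p = (0 : MvPolynomial (Fin N) ℤ) := by
  refine Finset.sum_involution (fun p _ => flip p) (fun p hp => ?_) (fun p hp _ => ?_)
    (fun p hp => ?_) (fun p hp => ?_)
  · rw [wgt_flip (nonempty_of_mem_idx hn hp)]; ring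
  · exact flip_ne (nonempty_of_mem_idx hn hp)
  · rw [mem_idx, flip_card (nonempty_of_mem_idx hn hp), ← mem_idx]; exact hp
  · exact flip_flip (nonempty_of_mem_idx hn hp)

/-- Key identity A: the alternating e-h convolution vanishes. -/
lemma esymm_hsymm_alt (n : ℕ) (hn : 1 ≤ n) :
    ∑ ab ∈ Finset.HasAntidiagonal.antidiagonal n,
      (-1 : MvPolynomial (Fin N) ℤ) ^ ab.1 * esymm (Fin N) ℤ ab.1 * hsymm (Fin N) ℤ ab.2 = 0 := by
  rw [expansion, sum_idx_eq_zero hn]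


lemma rectPartition_parts (i : ℕ) : (rectPartition 2 i).parts = Multiset.replicate i 2 := by
  show (Multiset.replicate i 2).filter (· ≠ 0) = Multiset.replicate i 2
  apply Multiset.filter_eq_self.2
  intro a ha
  rw [Multiset.eq_of_mem_replicate ha]
  decide

lemma ofSym_rect_iff {i : ℕ} (s : Sym (Fin N) (2 * i)) :
    Nat.Partition.ofSym s = rectPartition 2 i ↔ ∀ a ∈ s.1, s.1.count a = 2 := by
  constructor
  · intro h a ha
    have hp : s.1.dedup.map s.1.count = Multiset.replicate i 2 := by
      have := congrArg Nat.Partition.parts h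
      rwa [rectPartition_parts] at this
    have : s.1.count a ∈ s.1.dedup.map s.1.count :=
      Multiset.mem_map_of_mem _ (Multiset.mem_dedup.2 ha)
    rw [hp] at this
    exact Multiset.eq_of_mem_replicate this
  · intro h
    ext1
    rw [rectPartition_parts]
    show s.1.dedup.map s.1.count = Multiset.replicate i 2
    rw [Multiset.eq_replicate]
    constructor
    · rw [Multiset.card_map]
      have hsum : ∑ a ∈ s.1.toFinset, s.1.count a = 2 * i := by
        rw [Multiset.toFinset_sum_count_eq]; exact s.2
      have hsum2 : ∑ a ∈ s.1.toFinset, s.1.count a = 2 * s.1.toFinset.card := by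
        rw [Finset.sum_congr rfl (fun a ha => h a (Multiset.mem_toFinset.1 ha)),
          Finset.sum_const, smul_eq_mul, mul_comm]
      have : s.1.toFinset.card = i := by omega
      exact this
    · intro b hb
      rw [Multiset.mem_map] at hb
      obtain ⟨a, ha, rfl⟩ := hb
      exact h a (Multiset.mem_dedup.1 ha)

/-- Lemma C: the monomial symmetric polynomial of the rectangular partition `(2^i)`. -/
lemma msymm_rect (i : ℕ) :
    msymm (Fin N) ℤ (rectPartition 2 i) =
      ∑ A ∈ powersetCard i univ, ∏ j ∈ A, (X j : MvPolynomial (Fin N) ℤ) ^ 2 := by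
  rw [msymm]
  refine Finset.sum_bij' (i := fun s _ => s.1.1.toFinset)
    (j := fun A hA => ⟨Sym.mk (2 • A.val) (by
        rw [Multiset.card_nsmul]
        rw [mem_powersetCard_univ] at hA
        rw [show Multiset.card A.val = A.card from Finset.card_val A, hA]), by
      rw [ofSym_rect_iff]
      intro a ha
      show Multiset.count a (2 • A.val) = 2
      have hmem : a ∈ A.val := by
        have := Multiset.mem_nsmul.1 ha
        tauto
      rw [Multiset.count_nsmul, Multiset.count_eq_one_of_mem A.nodup hmem]⟩)
    ?_ (fun A hA => Finset.mem_univ _) ?_ ?_ ?_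
  · -- i maps into powersetCard i univ
    intro s _
    rw [mem_powersetCard_univ]
    show s.1.1.toFinset.card = i
    have h2 : ∀ a ∈ s.1.1, s.1.1.count a = 2 := (ofSym_rect_iff s.1).1 s.2
    have hsum : ∑ a ∈ s.1.1.toFinset, s.1.1.count a = 2 * i := by
      rw [Multiset.toFinset_sum_count_eq]; exact s.1.2
    have hsum2 : ∑ a ∈ s.1.1.toFinset, s.1.1.count a = 2 * s.1.1.toFinset.card := by
      rw [Finset.sum_congr rfl (fun a ha => h2 a (Multiset.mem_toFinset.1 ha)),
        Finset.sum_const, smul_eq_mul, mul_comm]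
    omega
  · -- left inverse
    intro s hs
    have h2 : ∀ a ∈ s.1.1, s.1.1.count a = 2 := (ofSym_rect_iff s.1).1 s.2
    apply Subtype.ext
    apply Subtype.ext
    show 2 • s.1.1.toFinset.val = s.1.1
    ext a
    rw [Multiset.count_nsmul]
    by_cases ha : a ∈ s.1.1
    · rw [Multiset.count_eq_one_of_mem (s.1.1.toFinset.nodup) (Multiset.mem_toFinset.2 ha),
        h2 a ha, mul_one]
    · rw [Multiset.count_eq_zero_of_notMem ha, Multiset.count_eq_zero_of_notMem
        (fun hx => ha (Multiset.mem_toFinset.1 hx)), mul_zero]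
  · -- right inverse
    intro A hA
    show (2 • A.val).toFinset = A
    rw [Multiset.toFinset_nsmul _ 2 (by norm_num), Finset.val_toFinset]
  · -- values
    intro s hs
    have h2 : ∀ a ∈ s.1.1, s.1.1.count a = 2 := (ofSym_rect_iff s.1).1 s.2
    have hrepr : s.1.1 = 2 • s.1.1.toFinset.val := by
      ext a
      rw [Multiset.count_nsmul]
      by_cases ha : a ∈ s.1.1
      · rw [Multiset.count_eq_one_of_mem (s.1.1.toFinset.nodup) (Multiset.mem_toFinset.2 ha),
          h2 a ha, mul_one]
      · rw [Multiset.count_eq_zero_of_notMem ha, Multiset.count_eq_zero_of_notMem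
          (fun hx => ha (Multiset.mem_toFinset.1 hx)), mul_zero]
    rw [show (s.1.1.map X).prod = ((2 • s.1.1.toFinset.val).map X).prod by rw [← hrepr]]
    rw [two_nsmul, Multiset.map_add, Multiset.prod_add]
    rw [Finset.prod_congr rfl (fun j _ => sq (X j)), Finset.prod_mul_distrib]
    rfl


/-! ### The e-e convolution -/

noncomputable def wgt2 (p : Finset (Fin N) × Finset (Fin N)) : MvPolynomial (Fin N) ℤ :=
  (-1) ^ p.1.card * (∏ i ∈ p.1, X i) * ∏ i ∈ p.2, X i

def idx2 (N n : ℕ) : Finset (Finset (Fin N) × Finset (Fin N)) :=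
  (Finset.HasAntidiagonal.antidiagonal n).biUnion fun ab => (powersetCard ab.1 univ) ×ˢ (powersetCard ab.2 univ)

lemma mem_idx2 {n : ℕ} {p : Finset (Fin N) × Finset (Fin N)} :
    p ∈ idx2 N n ↔ p.1.card + p.2.card = n := by
  simp only [idx2, Finset.mem_biUnion, Finset.HasAntidiagonal.mem_antidiagonal, Finset.mem_product,
    mem_powersetCard_univ, Prod.exists]
  constructor
  · rintro ⟨a, b, rfl, rfl, rfl⟩; rfl
  · rintro rfl
    exact ⟨p.1.card, p.2.card, rfl, rfl, rfl⟩

lemma expansion2 (n : ℕ) :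
    ∑ ab ∈ Finset.HasAntidiagonal.antidiagonal n,
      (-1 : MvPolynomial (Fin N) ℤ) ^ ab.1 * esymm (Fin N) ℤ ab.1 * esymm (Fin N) ℤ ab.2 =
    ∑ p ∈ idx2 N n, wgt2 p := by
  rw [idx2, Finset.sum_biUnion]
  · refine Finset.sum_congr rfl fun ab hab => ?_
    rw [Finset.HasAntidiagonal.mem_antidiagonal] at hab
    rw [esymm, esymm,
      show ((-1 : MvPolynomial (Fin N) ℤ) ^ ab.1 * ∑ t ∈ powersetCard ab.1 univ, ∏ i ∈ t, X i)
        = ∑ t ∈ powersetCard ab.1 univ, (-1 : MvPolynomial (Fin N) ℤ) ^ ab.1 * ∏ i ∈ t, X i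
        from Finset.mul_sum _ _ _,
      Finset.sum_mul_sum, Finset.sum_product]
    refine Finset.sum_congr rfl fun A hA => Finset.sum_congr rfl fun B hB => ?_
    rw [mem_powersetCard_univ] at hA
    simp only [wgt2, hA]
  · intro ab hab cd hcd hne
    simp only [Finset.disjoint_left, Finset.mem_product, mem_powersetCard_univ]
    rintro p ⟨h1, h2⟩ ⟨h3, h4⟩
    have e1 : ab.1 = cd.1 := by rw [← h1, ← h3]
    have e2 : ab.2 = cd.2 := by rw [← h2, ← h4]
    exact hne (Prod.ext e1 e2)

def flip2 (p : Finset (Fin N) × Finset (Fin N)) : Finset (Fin N) × Finset (Fin N) :=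
  if h : (p.1 ∆ p.2).Nonempty then
    if (p.1 ∆ p.2).max' h ∈ p.1 then
      (p.1.erase ((p.1 ∆ p.2).max' h), insert ((p.1 ∆ p.2).max' h) p.2)
    else (insert ((p.1 ∆ p.2).max' h) p.1, p.2.erase ((p.1 ∆ p.2).max' h))
  else p

lemma flip2_symmDiff {p : Finset (Fin N) × Finset (Fin N)} (h : (p.1 ∆ p.2).Nonempty) :
    (flip2 p).1 ∆ (flip2 p).2 = p.1 ∆ p.2 := by
  set v := (p.1 ∆ p.2).max' h with hv
  have hvmem : v ∈ p.1 ∆ p.2 := Finset.max'_mem _ h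
  rw [Finset.mem_symmDiff] at hvmem
  rw [flip2, dif_pos h, ← hv]
  by_cases hc : v ∈ p.1
  · have hv2 : v ∉ p.2 := by tauto
    rw [if_pos hc]
    ext a
    simp only [Finset.mem_symmDiff, Finset.mem_erase, Finset.mem_insert]
    by_cases hav : a = v
    · subst hav; tauto
    · tauto
  · have hv2 : v ∈ p.2 := by tauto
    rw [if_neg hc]
    ext a
    simp only [Finset.mem_symmDiff, Finset.mem_erase, Finset.mem_insert]
    by_cases hav : a = v
    · subst hav; tauto
    · tauto

lemma flip2_flip2 {p : Finset (Fin N) × Finset (Fin N)} (h : (p.1 ∆ p.2).Nonempty) :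
    flip2 (flip2 p) = p := by
  set v := (p.1 ∆ p.2).max' h with hv
  have hvmem : v ∈ p.1 ∆ p.2 := Finset.max'_mem _ h
  rw [Finset.mem_symmDiff] at hvmem
  have hu := flip2_symmDiff h
  have h2 : ((flip2 p).1 ∆ (flip2 p).2).Nonempty := by rw [hu]; exact h
  have hv2 : ((flip2 p).1 ∆ (flip2 p).2).max' h2 = v := by
    rw [hv]; congr 1
  rw [flip2, dif_pos h2, hv2]
  by_cases hc : v ∈ p.1
  · have hnv : v ∉ p.2 := by tauto
    have hfp : flip2 p = (p.1.erase v, insert v p.2) := by rw [flip2, dif_pos h, ← hv, if_pos hc]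
    simp only [hfp]
    rw [if_neg (Finset.notMem_erase v p.1)]
    show (insert v (p.1.erase v), (insert v p.2).erase v) = p
    rw [Finset.insert_erase hc, Finset.erase_insert hnv]
  · have hv2' : v ∈ p.2 := by tauto
    have hfp : flip2 p = (insert v p.1, p.2.erase v) := by rw [flip2, dif_pos h, ← hv, if_neg hc]
    simp only [hfp]
    rw [if_pos (Finset.mem_insert_self v p.1)]
    show ((insert v p.1).erase v, insert v (p.2.erase v)) = p
    rw [Finset.erase_insert hc, Finset.insert_erase hv2']

lemma wgt2_flip2 {p : Finset (Fin N) × Finset (Fin N)} (h : (p.1 ∆ p.2).Nonempty) :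
    wgt2 (flip2 p) = - wgt2 p := by
  set v := (p.1 ∆ p.2).max' h with hv
  have hvmem : v ∈ p.1 ∆ p.2 := Finset.max'_mem _ h
  rw [Finset.mem_symmDiff] at hvmem
  rw [flip2, dif_pos h, ← hv]
  by_cases hc : v ∈ p.1
  · have hnv : v ∉ p.2 := by tauto
    rw [if_pos hc]
    have hcard : p.1.card = (p.1.erase v).card + 1 := by
      rw [Finset.card_erase_of_mem hc]
      exact (Nat.succ_pred_eq_of_pos (Finset.card_pos.2 ⟨v, hc⟩)).symm
    simp only [wgt2]
    rw [hcard, ← Finset.mul_prod_erase p.1 X hc, Finset.prod_insert hnv]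
    ring
  · have hv2' : v ∈ p.2 := by tauto
    rw [if_neg hc]
    simp only [wgt2]
    rw [Finset.card_insert_of_notMem hc, Finset.prod_insert hc,
      ← Finset.mul_prod_erase p.2 X hv2']
    ring

lemma flip2_card {p : Finset (Fin N) × Finset (Fin N)} (h : (p.1 ∆ p.2).Nonempty) :
    (flip2 p).1.card + (flip2 p).2.card = p.1.card + p.2.card := by
  set v := (p.1 ∆ p.2).max' h with hv
  have hvmem : v ∈ p.1 ∆ p.2 := Finset.max'_mem _ h
  rw [Finset.mem_symmDiff] at hvmem
  rw [flip2, dif_pos h, ← hv]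
  by_cases hc : v ∈ p.1
  · have hnv : v ∉ p.2 := by tauto
    rw [if_pos hc]
    simp only [Finset.card_erase_of_mem hc, Finset.card_insert_of_notMem hnv]
    have := Finset.card_pos.2 (⟨v, hc⟩ : p.1.Nonempty)
    omega
  · have hv2' : v ∈ p.2 := by tauto
    rw [if_neg hc]
    simp only [Finset.card_insert_of_notMem hc, Finset.card_erase_of_mem hv2']
    have := Finset.card_pos.2 (⟨v, hv2'⟩ : p.2.Nonempty)
    omega

lemma flip2_ne_diag {p : Finset (Fin N) × Finset (Fin N)} (h : (p.1 ∆ p.2).Nonempty) :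
    (flip2 p).1 ≠ (flip2 p).2 := by
  set v := (p.1 ∆ p.2).max' h with hv
  have hvmem : v ∈ p.1 ∆ p.2 := Finset.max'_mem _ h
  have : v ∈ (flip2 p).1 ∆ (flip2 p).2 := by rw [flip2_symmDiff h]; exact hvmem
  intro heq
  rw [heq] at this
  rw [Finset.mem_symmDiff] at this
  tauto

lemma flip2_ne {p : Finset (Fin N) × Finset (Fin N)} (h : (p.1 ∆ p.2).Nonempty) :
    flip2 p ≠ p := by
  set v := (p.1 ∆ p.2).max' h with hv
  have hvmem : v ∈ p.1 ∆ p.2 := Finset.max'_mem _ h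
  rw [Finset.mem_symmDiff] at hvmem
  rw [flip2, dif_pos h, ← hv]
  by_cases hc : v ∈ p.1
  · rw [if_pos hc]
    intro heq
    have := congrArg Prod.fst heq
    simp only at this
    rw [← this] at hc
    exact Finset.notMem_erase v p.1 hc
  · rw [if_neg hc]
    intro heq
    have := congrArg Prod.fst heq
    simp only at this
    exact hc (this ▸ Finset.mem_insert_self v p.1)

lemma symmDiff_nonempty_of_ne {p : Finset (Fin N) × Finset (Fin N)} (h : p.1 ≠ p.2) :
    (p.1 ∆ p.2).Nonempty := by
  rw [Finset.nonempty_iff_ne_empty]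
  intro he
  exact h (symmDiff_eq_bot.1 he)

lemma sum_idx2_offdiag (n : ℕ) :
    ∑ p ∈ (idx2 N n).filter (fun p => p.1 ≠ p.2), wgt2 p = 0 := by
  refine Finset.sum_involution (fun p _ => flip2 p) (fun p hp => ?_) (fun p hp _ => ?_)
    (fun p hp => ?_) (fun p hp => ?_)
  · rw [Finset.mem_filter] at hp
    rw [wgt2_flip2 (symmDiff_nonempty_of_ne hp.2)]; ring
  · rw [Finset.mem_filter] at hp
    exact flip2_ne (symmDiff_nonempty_of_ne hp.2)
  · rw [Finset.mem_filter] at hp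
    rw [Finset.mem_filter, mem_idx2, flip2_card (symmDiff_nonempty_of_ne hp.2), ← mem_idx2]
    exact ⟨hp.1, flip2_ne_diag (symmDiff_nonempty_of_ne hp.2)⟩
  · rw [Finset.mem_filter] at hp
    exact flip2_flip2 (symmDiff_nonempty_of_ne hp.2)

lemma sum_idx2_diag (i : ℕ) :
    ∑ p ∈ (idx2 N (2 * i)).filter (fun p => p.1 = p.2), wgt2 p =
      (-1 : MvPolynomial (Fin N) ℤ) ^ i *
        ∑ A ∈ powersetCard i univ, ∏ j ∈ A, (X j : MvPolynomial (Fin N) ℤ) ^ 2 := by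
  rw [Finset.mul_sum]
  refine Finset.sum_bij' (i := fun p _ => p.1) (j := fun A _ => (A, A)) ?_ ?_ ?_ ?_ ?_
  · intro p hp
    rw [Finset.mem_filter, mem_idx2] at hp
    rw [mem_powersetCard_univ]
    show p.1.card = i
    have h3 := hp.1
    rw [← hp.2] at h3
    omega
  · intro A hA
    rw [mem_powersetCard_univ] at hA
    rw [Finset.mem_filter, mem_idx2]
    exact ⟨by show A.card + A.card = 2 * i; omega, rfl⟩
  · intro p hp
    rw [Finset.mem_filter, mem_idx2] at hp
    show (p.1, p.1) = p
    exact Prod.ext rfl hp.2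
  · intro A hA
    rfl
  · intro p hp
    rw [Finset.mem_filter, mem_idx2] at hp
    have h3 := hp.1
    rw [← hp.2] at h3
    have hcard : p.1.card = i := by omega
    show wgt2 p = (-1) ^ i * ∏ j ∈ p.1, (X j : MvPolynomial (Fin N) ℤ) ^ 2
    simp only [wgt2, hcard]
    rw [← hp.2]
    rw [Finset.prod_congr rfl (fun j _ => sq (X j)), Finset.prod_mul_distrib]
    ring

/-- Lemma B: the alternating e-e convolution at even degree. -/
lemma esymm_esymm_alt_even (i : ℕ) :
    ∑ ab ∈ Finset.HasAntidiagonal.antidiagonal (2 * i),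
      (-1 : MvPolynomial (Fin N) ℤ) ^ ab.1 * esymm (Fin N) ℤ ab.1 * esymm (Fin N) ℤ ab.2 =
      (-1 : MvPolynomial (Fin N) ℤ) ^ i * msymm (Fin N) ℤ (rectPartition 2 i) := by
  rw [expansion2, ← Finset.sum_filter_add_sum_filter_not (idx2 N (2 * i)) (fun p => p.1 = p.2),
    msymm_rect]
  have h1 := sum_idx2_diag (N := N) i
  have h2 := sum_idx2_offdiag (N := N) (2 * i)
  rw [h1]
  rw [show (∑ p ∈ (idx2 N (2*i)).filter (fun p => ¬ p.1 = p.2), wgt2 p) = 0 from h2]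
  ring


/-- Lemma D: the alternating e-e convolution vanishes at odd degree. -/
lemma esymm_esymm_alt_odd (n : ℕ) (hn : Odd n) :
    ∑ ab ∈ Finset.HasAntidiagonal.antidiagonal n,
      (-1 : MvPolynomial (Fin N) ℤ) ^ ab.1 * esymm (Fin N) ℤ ab.1 * esymm (Fin N) ℤ ab.2 = 0 := by
  set S := ∑ ab ∈ Finset.HasAntidiagonal.antidiagonal n,
      (-1 : MvPolynomial (Fin N) ℤ) ^ ab.1 * esymm (Fin N) ℤ ab.1 * esymm (Fin N) ℤ ab.2 with hS
  have hswap : S = ∑ ab ∈ Finset.HasAntidiagonal.antidiagonal n,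
      (-1 : MvPolynomial (Fin N) ℤ) ^ ab.2 * esymm (Fin N) ℤ ab.2 * esymm (Fin N) ℤ ab.1 := by
    rw [hS]
    exact (Finset.Nat.sum_antidiagonal_swap
      (f := fun p => (-1 : MvPolynomial (Fin N) ℤ) ^ p.1 * esymm (Fin N) ℤ p.1 *
        esymm (Fin N) ℤ p.2)).symm
  have hneg : S = -S := by
    nth_rewrite 1 [hswap]
    rw [hS, ← Finset.sum_neg_distrib]
    refine Finset.sum_congr rfl fun ab hab => ?_
    rw [Finset.HasAntidiagonal.mem_antidiagonal] at hab
    have h2 : (-1 : MvPolynomial (Fin N) ℤ) ^ ab.1 * (-1) ^ ab.2 = -1 := by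
      rw [← pow_add, hab]
      exact Odd.neg_one_pow hn
    have h3 : (-1 : MvPolynomial (Fin N) ℤ) ^ ab.1 * (-1) ^ ab.1 = 1 := by
      rw [← pow_add]
      exact Even.neg_one_pow ⟨ab.1, rfl⟩
    have hsgn : (-1 : MvPolynomial (Fin N) ℤ) ^ ab.2 = -(-1) ^ ab.1 := by
      linear_combination (-1 : MvPolynomial (Fin N) ℤ) ^ ab.1 * h2 -
        (-1 : MvPolynomial (Fin N) ℤ) ^ ab.2 * h3
    rw [hsgn]
    ring
  have h2S : S + S = 0 := by linear_combination hneg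
  exact add_self_eq_zero.mp h2S

lemma sum_even_vanish (G : ℕ → MvPolynomial (Fin N) ℤ) (hodd : ∀ m, Odd m → G m = 0) (k : ℕ) :
    ∑ n ∈ Finset.range (2 * k + 1), G n = ∑ i ∈ Finset.range (k + 1), G (2 * i) := by
  induction k with
  | zero => simp
  | succ k ih =>
    rw [show 2 * (k + 1) + 1 = (2 * k + 1) + 1 + 1 by ring, Finset.sum_range_succ,
      Finset.sum_range_succ, ih, hodd (2 * k + 1) ⟨k, by ring⟩,
      Finset.sum_range_succ (n := k + 1)]
    rw [show 2 * k + 1 + 1 = 2 * (k + 1) by ring]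
    ring

lemma triple_swap (m : ℕ) (f : ℕ → ℕ → ℕ → MvPolynomial (Fin N) ℤ) :
    ∑ n ∈ Finset.range (m + 1), ∑ ab ∈ Finset.HasAntidiagonal.antidiagonal n, f ab.1 ab.2 (m - n) =
    ∑ b ∈ Finset.range (m + 1), ∑ ac ∈ Finset.HasAntidiagonal.antidiagonal (m - b), f ac.1 b ac.2 := by
  rw [Finset.sum_sigma', Finset.sum_sigma']
  refine Finset.sum_nbij' (i := fun x => ⟨x.2.2, (x.2.1, m - x.1)⟩)
    (j := fun y => ⟨y.2.1 + y.1, (y.2.1, y.1)⟩) ?_ ?_ ?_ ?_ ?_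
  · rintro ⟨n, a, b⟩ hmem
    simp only [Finset.mem_sigma, Finset.mem_range, Finset.HasAntidiagonal.mem_antidiagonal] at hmem
    show (⟨b, (a, m - n)⟩ : (_ : ℕ) × ℕ × ℕ) ∈
      (Finset.range (m + 1)).sigma (fun b => Finset.HasAntidiagonal.antidiagonal (m - b))
    simp only [Finset.mem_sigma, Finset.mem_range, Finset.HasAntidiagonal.mem_antidiagonal]
    obtain ⟨h1, h2⟩ := hmem
    exact ⟨by omega, by omega⟩
  · rintro ⟨b, a, c⟩ hmem
    simp only [Finset.mem_sigma, Finset.mem_range, Finset.HasAntidiagonal.mem_antidiagonal] at hmem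
    show (⟨a + b, (a, b)⟩ : (_ : ℕ) × ℕ × ℕ) ∈
      (Finset.range (m + 1)).sigma (fun n => Finset.HasAntidiagonal.antidiagonal n)
    simp only [Finset.mem_sigma, Finset.mem_range, Finset.HasAntidiagonal.mem_antidiagonal]
    obtain ⟨h1, h2⟩ := hmem
    exact ⟨by omega, by trivial⟩
  · rintro ⟨n, a, b⟩ hmem
    simp only [Finset.mem_sigma, Finset.mem_range, Finset.HasAntidiagonal.mem_antidiagonal] at hmem
    show (⟨a + b, (a, b)⟩ : (_ : ℕ) × ℕ × ℕ) = ⟨n, (a, b)⟩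
    obtain ⟨h1, h2⟩ := hmem
    rw [h2]
  · rintro ⟨b, a, c⟩ hmem
    simp only [Finset.mem_sigma, Finset.mem_range, Finset.HasAntidiagonal.mem_antidiagonal] at hmem
    show (⟨b, (a, m - (a + b))⟩ : (_ : ℕ) × ℕ × ℕ) = ⟨b, (a, c)⟩
    have : m - (a + b) = c := by omega
    rw [this]
  · rintro ⟨n, a, b⟩ hmem
    rfl

lemma triple_eval (k : ℕ) :
    ∑ b ∈ Finset.range (2 * k + 1),
      (∑ ac ∈ Finset.HasAntidiagonal.antidiagonal (2 * k - b),
        (-1 : MvPolynomial (Fin N) ℤ) ^ ac.1 * esymm (Fin N) ℤ ac.1 * hsymm (Fin N) ℤ ac.2) *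
        esymm (Fin N) ℤ b = esymm (Fin N) ℤ (2 * k) := by
  rw [Finset.sum_eq_single_of_mem (2 * k) (Finset.self_mem_range_succ (2 * k))]
  · rw [Nat.sub_self, Finset.Nat.antidiagonal_zero, Finset.sum_singleton]
    simp
  · intro b hb hne
    rw [Finset.mem_range] at hb
    rw [esymm_hsymm_alt (2 * k - b) (by omega), zero_mul]

end EsymmHsymmAux



/-- `e_{2k} = ∑_{i = 0}^{k} (-1)^i ⬝ m_{(2^i)} ⬝ h_{2k - 2i}`. -/
theorem esymm_eq_alternating_sum_msymm_hsymm (k N : ℕ) (hk : 1 ≤ k) :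
    esymm (Fin N) ℤ (2 * k) =
      ∑ i ∈ Finset.range (k + 1),
        (-1 : MvPolynomial (Fin N) ℤ) ^ i * msymm (Fin N) ℤ (rectPartition 2 i) *
          hsymm (Fin N) ℤ (2 * k - 2 * i) := by
  have step1 : ∀ i ∈ Finset.range (k + 1),
      (-1 : MvPolynomial (Fin N) ℤ) ^ i * msymm (Fin N) ℤ (rectPartition 2 i) *
        hsymm (Fin N) ℤ (2 * k - 2 * i) =
      (∑ ab ∈ Finset.HasAntidiagonal.antidiagonal (2 * i),
        (-1 : MvPolynomial (Fin N) ℤ) ^ ab.1 * esymm (Fin N) ℤ ab.1 * esymm (Fin N) ℤ ab.2) *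
        hsymm (Fin N) ℤ (2 * k - 2 * i) := by
    intro i _
    rw [EsymmHsymmAux.esymm_esymm_alt_even i]
  rw [Finset.sum_congr rfl step1]
  have step2 := EsymmHsymmAux.sum_even_vanish (N := N)
    (G := fun n => (∑ ab ∈ Finset.HasAntidiagonal.antidiagonal n,
      (-1 : MvPolynomial (Fin N) ℤ) ^ ab.1 * esymm (Fin N) ℤ ab.1 * esymm (Fin N) ℤ ab.2) *
        hsymm (Fin N) ℤ (2 * k - n))
    (fun m hm => by
      show (∑ ab ∈ Finset.HasAntidiagonal.antidiagonal m,
        (-1 : MvPolynomial (Fin N) ℤ) ^ ab.1 * esymm (Fin N) ℤ ab.1 * esymm (Fin N) ℤ ab.2) *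
          hsymm (Fin N) ℤ (2 * k - m) = 0
      rw [EsymmHsymmAux.esymm_esymm_alt_odd m hm, zero_mul]) k
  rw [← step2]
  have step3 : ∀ n ∈ Finset.range (2 * k + 1),
      (∑ ab ∈ Finset.HasAntidiagonal.antidiagonal n,
        (-1 : MvPolynomial (Fin N) ℤ) ^ ab.1 * esymm (Fin N) ℤ ab.1 * esymm (Fin N) ℤ ab.2) *
        hsymm (Fin N) ℤ (2 * k - n) =
      ∑ ab ∈ Finset.HasAntidiagonal.antidiagonal n,
        (-1 : MvPolynomial (Fin N) ℤ) ^ ab.1 * esymm (Fin N) ℤ ab.1 *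
          hsymm (Fin N) ℤ (2 * k - n) * esymm (Fin N) ℤ ab.2 := by
    intro n _
    rw [Finset.sum_mul]
    exact Finset.sum_congr rfl fun ab _ => by ring
  rw [Finset.sum_congr rfl step3]
  rw [EsymmHsymmAux.triple_swap (2 * k) (fun a b c =>
    (-1 : MvPolynomial (Fin N) ℤ) ^ a * esymm (Fin N) ℤ a * hsymm (Fin N) ℤ c *
      esymm (Fin N) ℤ b)]
  have step4 : ∀ b ∈ Finset.range (2 * k + 1),
      (∑ ac ∈ Finset.HasAntidiagonal.antidiagonal (2 * k - b),
        (-1 : MvPolynomial (Fin N) ℤ) ^ ac.1 * esymm (Fin N) ℤ ac.1 * hsymm (Fin N) ℤ ac.2 *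
          esymm (Fin N) ℤ b) =
      (∑ ac ∈ Finset.HasAntidiagonal.antidiagonal (2 * k - b),
        (-1 : MvPolynomial (Fin N) ℤ) ^ ac.1 * esymm (Fin N) ℤ ac.1 * hsymm (Fin N) ℤ ac.2) *
        esymm (Fin N) ℤ b := by
    intro b _
    rw [Finset.sum_mul]
  rw [Finset.sum_congr rfl step4]
  exact (EsymmHsymmAux.triple_eval k).symm
end

section
/- Let u ≥ 0, l ≥ 0, k ≥ 1 and v ≥ 1 be integers. In the polynomial ring ℤ[X,Y,Z], the coefficient of the monomial X^l · Y^{k−1} · Z^{2k+l−2} in the polynomial (1 + XZ)^u · (1 + XZ + YZ^2)^{v−1} equals binom(v−1, k−1) · binom(u+v−k, l) when v ≥ k, and equals 0 when v < k. -/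
open MvPolynomial Finset

lemma aux_coeff (N : ℕ) (m : Fin 3 →₀ ℕ) :
    MvPolynomial.coeff m ((1 + X 0 * X 2 : MvPolynomial (Fin 3) ℤ) ^ N) =
      if m 1 = 0 ∧ m 0 = m 2 then (N.choose (m 0) : ℤ) else 0 := by
  rw [add_comm, add_pow, coeff_sum]
  have hterm : ∀ i : ℕ, ((X 0 * X 2 : MvPolynomial (Fin 3) ℤ) ^ i * 1 ^ (N - i) * (N.choose i : MvPolynomial (Fin 3) ℤ))
      = monomial (Finsupp.single 0 i + Finsupp.single 2 i) ((N.choose i : ℤ)) := by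
    intro i
    rw [one_pow, mul_one, mul_pow, X_pow_eq_monomial, X_pow_eq_monomial, monomial_mul,
      ← C_eq_coe_nat, mul_comm, C_mul_monomial]
    simp
  simp only [hterm, coeff_monomial]
  have key : ∀ i : ℕ, (Finsupp.single (0:Fin 3) i + Finsupp.single 2 i = m) ↔ (m 0 = i ∧ m 1 = 0 ∧ m 2 = i) := by
    intro i
    constructor
    · rintro rfl
      simp [Finsupp.single_apply]
    · rintro ⟨h0, h1, h2⟩
      ext x
      fin_cases x <;> simp_all [Finsupp.single_apply]
  by_cases h : m 1 = 0 ∧ m 0 = m 2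
  · rw [Finset.sum_eq_single (m 0), if_pos ((key (m 0)).2 ⟨rfl, h.1, h.2.symm⟩), if_pos h]
    · intro i _ hi
      rw [if_neg]
      intro hc
      exact hi ((key i).1 hc).1.symm
    · intro hm
      rw [if_pos ((key (m 0)).2 ⟨rfl, h.1, h.2.symm⟩)]
      have : N < m 0 := by simpa using hm
      simp [Nat.choose_eq_zero_of_lt this]
  · rw [if_neg h, Finset.sum_eq_zero]
    intro i _
    rw [if_neg]
    intro hc
    obtain ⟨h0, h1, h2⟩ := (key i).1 hc
    exact h ⟨h1, h0.trans h2.symm⟩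

/-- The coefficient of `X^l Y^(k-1) Z^(2k+l-2)` in `(1 + XZ)^u (1 + XZ + YZ^2)^(v-1)`
is `C(v-1, k-1) ⬝ C(u+v-k, l)` if `v ≥ k`, and `0` if `v < k`.
Here variable `0` plays the role of `X`, variable `1` of `Y`, and variable `2` of `Z`. -/
theorem coeff_key_computation (u l k v : ℕ) (hk : 1 ≤ k) (hv : 1 ≤ v) :
    MvPolynomial.coeff
        (Finsupp.single (0 : Fin 3) l + Finsupp.single (1 : Fin 3) (k - 1) +
          Finsupp.single (2 : Fin 3) (2 * k + l - 2))
        ((1 + X 0 * X 2) ^ u * (1 + X 0 * X 2 + X 1 * X 2 ^ 2) ^ (v - 1) :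
          MvPolynomial (Fin 3) ℤ) =
      if k ≤ v then ((v - 1).choose (k - 1) * (u + v - k).choose l : ℤ) else 0 := by
  set n := v - 1 with hn
  set m : Fin 3 →₀ ℕ := Finsupp.single (0 : Fin 3) l + Finsupp.single (1 : Fin 3) (k - 1) +
      Finsupp.single (2 : Fin 3) (2 * k + l - 2) with hmdef
  have hm0 : m 0 = l := by simp [hmdef, Finsupp.single_apply]
  have hm1 : m 1 = k - 1 := by simp [hmdef, Finsupp.single_apply]
  have hm2 : m 2 = 2 * k + l - 2 := by simp [hmdef, Finsupp.single_apply]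
  have hsplit : (1 + X 0 * X 2 + X 1 * X 2 ^ 2 : MvPolynomial (Fin 3) ℤ)
      = X 1 * X 2 ^ 2 + (1 + X 0 * X 2) := by ring
  rw [hsplit, add_pow (X 1 * X 2 ^ 2) (1 + X 0 * X 2) n, Finset.mul_sum, coeff_sum]
  have hterm : ∀ j : ℕ, ((1 + X 0 * X 2 : MvPolynomial (Fin 3) ℤ)) ^ u *
        ((X 1 * X 2 ^ 2) ^ j * (1 + X 0 * X 2) ^ (n - j) * (n.choose j : MvPolynomial (Fin 3) ℤ))
      = (1 + X 0 * X 2) ^ (u + (n - j)) *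
        monomial (Finsupp.single 1 j + Finsupp.single 2 (2 * j)) ((n.choose j : ℤ)) := by
    intro j
    have h1 : (X 1 * X 2 ^ 2 : MvPolynomial (Fin 3) ℤ) ^ j
        = monomial (Finsupp.single 1 j + Finsupp.single 2 (2 * j)) 1 := by
      rw [mul_pow, ← pow_mul, X_pow_eq_monomial, X_pow_eq_monomial, monomial_mul, one_mul]
    have h2 : (monomial (Finsupp.single (1 : Fin 3) j + Finsupp.single 2 (2 * j))
          ((n.choose j : ℤ)) : MvPolynomial (Fin 3) ℤ)
        = monomial (Finsupp.single 1 j + Finsupp.single 2 (2 * j)) 1 * C ((n.choose j : ℤ)) := by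
      rw [mul_comm ((monomial (Finsupp.single (1 : Fin 3) j + Finsupp.single 2 (2 * j))) (1:ℤ)) (C ((n.choose j : ℤ))), C_mul_monomial, mul_one]
    rw [h1, ← C_eq_coe_nat, h2, pow_add]
    ring
  simp only [hterm, coeff_mul_monomial', aux_coeff]
  have hle : ∀ j : ℕ, (Finsupp.single (1 : Fin 3) j + Finsupp.single 2 (2 * j) ≤ m)
      ↔ (j ≤ k - 1 ∧ 2 * j ≤ 2 * k + l - 2) := by
    intro j
    rw [Finsupp.le_def]
    constructor
    · intro h
      refine ⟨?_, ?_⟩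
      · have := h 1; simpa [Finsupp.single_apply, hm1] using this
      · have := h 2; simpa [Finsupp.single_apply, hm2] using this
    · rintro ⟨h1, h2⟩ x
      fin_cases x <;> simp [Finsupp.single_apply, hm0, hm1, hm2, h1, h2]
  have hs0 : ∀ j : ℕ, ((m - (Finsupp.single (1 : Fin 3) j + Finsupp.single 2 (2 * j)) : Fin 3 →₀ ℕ)) 0 = l := by
    intro j; rw [Finsupp.tsub_apply]; simp [Finsupp.single_apply, hm0]
  have hs1 : ∀ j : ℕ, ((m - (Finsupp.single (1 : Fin 3) j + Finsupp.single 2 (2 * j)) : Fin 3 →₀ ℕ)) 1 = k - 1 - j := by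
    intro j; rw [Finsupp.tsub_apply]; simp [Finsupp.single_apply, hm1]
  have hs2 : ∀ j : ℕ, ((m - (Finsupp.single (1 : Fin 3) j + Finsupp.single 2 (2 * j)) : Fin 3 →₀ ℕ)) 2 = 2 * k + l - 2 - 2 * j := by
    intro j; rw [Finsupp.tsub_apply]; simp [Finsupp.single_apply, hm2]
  rw [Finset.sum_eq_single (k - 1)]
  · rw [if_pos ((hle (k - 1)).2 ⟨le_refl _, by omega⟩), hs0, hs1, hs2,
      if_pos ⟨by omega, by omega⟩]
    by_cases hkv : k ≤ v
    · rw [if_pos hkv]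
      have : u + (n - (k - 1)) = u + v - k := by omega
      rw [this]
      push_cast
      ring
    · rw [if_neg hkv]
      have : n.choose (k - 1) = 0 := Nat.choose_eq_zero_of_lt (by omega)
      simp [this]
  · intro j hj hjne
    by_cases hle' : Finsupp.single (1 : Fin 3) j + Finsupp.single 2 (2 * j) ≤ m
    · rw [if_pos hle', hs1]
      have hjlt : j < k - 1 := lt_of_le_of_ne ((hle j).1 hle').1 hjne
      rw [if_neg (fun h => absurd h.1 (by omega)), zero_mul]
    · rw [if_neg hle']
  · intro hmem
    rw [if_pos ((hle (k - 1)).2 ⟨le_refl _, by omega⟩)]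
    have : n.choose (k - 1) = 0 := Nat.choose_eq_zero_of_lt (by simp at hmem; omega)
    simp [this]
end
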